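/- Let $G = (V, E)$ be an infinite graph and let $\Gamma(V_1, V_2)$ denote the set of paths (viewed as subsets of $V$) joining two nonempty disjoint vertex sets $V_1, V_2$. Let $V_1, V_2, \ldots, V_{2m}$ be mutually disjoint nonempty vertex subsets such that for all $i_1 < i_2 < i_3$, every path from $V_{i_1}$ to $V_{i_3}$ meets $V_{i_2}$. Then the vertex extremal lengths satisfy the superadditivity $\operatorname{VEL}(V_1, V_{2m}) \geq \sum_{k=1}^{m} \operatorname{VEL}(V_{2k-1}, V_{2k})$. -/

import Mathlib

open scoped ENNReal

/-- The family of paths (viewed as vertex sets, namely supports of walks) joining `V₁` and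
`V₂` in the graph `G`. -/
def pathFamily {V : Type*} (G : SimpleGraph V) (V₁ V₂ : Set V) : Set (Set V) :=
  {S | ∃ (u v : V) (w : G.Walk u v), u ∈ V₁ ∧ v ∈ V₂ ∧ S = {x | x ∈ w.support}}

/-- The area of a vertex metric. -/
noncomputable def vArea {V : Type*} (ν : V → ℝ≥0∞) : ℝ≥0∞ := ∑' v, ν v ^ 2

/-- A vertex metric is admissible for a family of vertex sets if every member has
length at least one. -/
def vAdmissible {V : Type*} (A : Set (Set V)) (ν : V → ℝ≥0∞) : Prop :=
  ∀ α ∈ A, 1 ≤ ∑' x : α, ν x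

/-- The vertex modulus of a family of vertex sets. -/
noncomputable def MOD {V : Type*} (A : Set (Set V)) : ℝ≥0∞ :=
  ⨅ (ν : V → ℝ≥0∞) (_ : vAdmissible A ν), vArea ν

/-- The vertex extremal length of a family of vertex sets. -/
noncomputable def VEL {V : Type*} (A : Set (Set V)) : ℝ≥0∞ := (MOD A)⁻¹

section Aux

variable {V : Type*} (G : SimpleGraph V) (m : ℕ) (W : ℕ → Set V)

/-- A walk from `W (2k-1)` to `W (2k)` meeting the `W j`'s only at its endpoints. -/
def GoodWalk (k : ℕ) {a b : V} (p : G.Walk a b) : Prop :=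
  a ∈ W (2 * k - 1) ∧ b ∈ W (2 * k) ∧
    ∀ j ∈ Finset.Icc 1 (2 * m), ∀ y ∈ p.support, y ∈ W j → y = a ∨ y = b

/-- The region between `W (2k-1)` and `W (2k)`. -/
def Rk (k : ℕ) : Set V :=
  {x | ∃ (a b : V) (p : G.Walk a b), p.IsPath ∧ GoodWalk G m W k p ∧ x ∈ p.support}

variable {G m W}

lemma mem_takeUntil_end_eq {V : Type*} [DecidableEq V] {G : SimpleGraph V} {u v x : V}
    {p : G.Walk u v} (hp : p.IsPath) (hx : x ∈ p.support)
    (hv : v ∈ (p.takeUntil x hx).support) : x = v := by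
  have hnd : p.support.Nodup := hp.support_nodup
  conv at hnd => rw [← p.take_spec hx, SimpleGraph.Walk.support_append]
  have hdis := List.disjoint_of_nodup_append hnd
  have hvd : v ∈ (p.dropUntil x hx).support := SimpleGraph.Walk.end_mem_support _
  rw [SimpleGraph.Walk.support_eq_cons] at hvd
  rcases List.mem_cons.1 hvd with h | h
  · exact h.symm
  · exact absurd h (hdis hv)

variable (hdisj : ∀ i ∈ Finset.Icc 1 (2 * m), ∀ j ∈ Finset.Icc 1 (2 * m), i ≠ j →
      Disjoint (W i) (W j))
    (hsep : ∀ i₁ i₂ i₃ : ℕ, 1 ≤ i₁ → i₁ < i₂ → i₂ < i₃ → i₃ ≤ 2 * m →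
      ∀ S ∈ pathFamily G (W i₁) (W i₃), (S ∩ W i₂).Nonempty)

include hdisj in
lemma W_ne {i j : ℕ} (hi1 : 1 ≤ i) (hi2 : i ≤ 2 * m) (hj1 : 1 ≤ j) (hj2 : j ≤ 2 * m)
    (hij : i ≠ j) {x : V} (hx : x ∈ W i) (hy : x ∈ W j) : False :=
  Set.disjoint_left.1 (hdisj i (Finset.mem_Icc.2 ⟨hi1, hi2⟩) j (Finset.mem_Icc.2 ⟨hj1, hj2⟩) hij)
    hx hy

include hdisj hsep in
lemma Rk_disjoint {k k' : ℕ} (hk : 1 ≤ k) (hkk' : k < k') (hk' : k' ≤ m) {x : V}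
    (hx : x ∈ Rk G m W k) (hx' : x ∈ Rk G m W k') : False := by
  classical
  obtain ⟨u, v, p, hp, ⟨hu, hv, hgood⟩, hxp⟩ := hx
  obtain ⟨u', v', p', hp', ⟨hu', hv', hgood'⟩, hxp'⟩ := hx'
  set s : G.Walk u v' := (p.takeUntil x hxp).append (p'.dropUntil x hxp') with hs
  have hS : {y | y ∈ s.support} ∈ pathFamily G (W (2 * k - 1)) (W (2 * k')) :=
    ⟨u, v', s, hu, hv', rfl⟩
  obtain ⟨y, hyS, hyW⟩ := hsep (2 * k - 1) (2 * k) (2 * k') (by omega) (by omega) (by omega)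
    (by omega) _ hS
  have hymem : y ∈ (p.takeUntil x hxp).support ∨ y ∈ (p'.dropUntil x hxp').support.tail := by
    have h := hyS
    rw [Set.mem_setOf_eq, hs, SimpleGraph.Walk.support_append, List.mem_append] at h
    exact h
  have hxcon : x ∈ W (2 * k) → False := by
    intro hxW
    rcases hgood' (2 * k) (Finset.mem_Icc.2 ⟨by omega, by omega⟩) x
        (SimpleGraph.Walk.support_dropUntil_subset _ hxp'
          (SimpleGraph.Walk.start_mem_support _)) hxW with rfl | rfl
    · exact W_ne hdisj (i := 2 * k) (j := 2 * k' - 1) (by omega) (by omega) (by omega) (by omega)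
        (by omega) hxW hu'
    · exact W_ne hdisj (i := 2 * k) (j := 2 * k') (by omega) (by omega) (by omega) (by omega)
        (by omega) hxW hv'
  rcases hymem with hy1 | hy2
  · have hyp : y ∈ p.support := SimpleGraph.Walk.support_takeUntil_subset _ _ hy1
    rcases hgood (2 * k) (Finset.mem_Icc.2 ⟨by omega, by omega⟩) y hyp hyW with rfl | rfl
    · exact W_ne hdisj (i := 2 * k) (j := 2 * k - 1) (by omega) (by omega) (by omega) (by omega)
        (by omega) hyW hu
    · exact hxcon ((mem_takeUntil_end_eq hp hxp hy1) ▸ hyW)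
  · have hyp' : y ∈ p'.support :=
      SimpleGraph.Walk.support_dropUntil_subset _ _ (List.mem_of_mem_tail hy2)
    rcases hgood' (2 * k) (Finset.mem_Icc.2 ⟨by omega, by omega⟩) y hyp' hyW with rfl | rfl
    · exact W_ne hdisj (i := 2 * k) (j := 2 * k' - 1) (by omega) (by omega) (by omega) (by omega)
        (by omega) hyW hu'
    · exact W_ne hdisj (i := 2 * k) (j := 2 * k') (by omega) (by omega) (by omega) (by omega)
        (by omega) hyW hv'

include hdisj hsep in
lemma exists_good_subwalk (hm : 0 < m) {k : ℕ} (hk1 : 1 ≤ k) (hk2 : k ≤ m) {S : Set V}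
    (hS : S ∈ pathFamily G (W 1) (W (2 * m))) :
    ∃ (a b : V) (p : G.Walk a b), p.IsPath ∧ GoodWalk G m W k p ∧ ∀ x ∈ p.support, x ∈ S := by
  classical
  obtain ⟨u, v, w, hu, hv, rfl⟩ := hS
  have ha : ∃ a, a ∈ w.support ∧ a ∈ W (2 * k - 1) := by
    by_cases h1 : 2 * k - 1 = 1
    · exact ⟨u, w.start_mem_support, by rw [h1]; exact hu⟩
    · obtain ⟨a, haS, haW⟩ := hsep 1 (2 * k - 1) (2 * m) le_rfl (by omega) (by omega) le_rfl
        _ ⟨u, v, w, hu, hv, rfl⟩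
      exact ⟨a, haS, haW⟩
  have hb : ∃ b, b ∈ w.support ∧ b ∈ W (2 * k) := by
    by_cases h1 : 2 * k = 2 * m
    · exact ⟨v, w.end_mem_support, by rw [h1]; exact hv⟩
    · obtain ⟨b, hbS, hbW⟩ := hsep 1 (2 * k) (2 * m) le_rfl (by omega) (by omega) le_rfl
        _ ⟨u, v, w, hu, hv, rfl⟩
      exact ⟨b, hbS, hbW⟩
  obtain ⟨a, haS, haW⟩ := ha
  obtain ⟨b, hbS, hbW⟩ := hb
  let P : ℕ → Prop := fun n => ∃ (a' b' : V) (q : G.Walk a' b'),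
    a' ∈ W (2 * k - 1) ∧ b' ∈ W (2 * k) ∧ (∀ x ∈ q.support, x ∈ w.support) ∧ q.length = n
  have hP : ∃ n, P n := by
    refine ⟨_, a, b, (w.takeUntil a haS).reverse.append (w.takeUntil b hbS), haW, hbW, ?_, rfl⟩
    intro x hx
    rw [SimpleGraph.Walk.support_append, List.mem_append] at hx
    rcases hx with hx | hx
    · rw [SimpleGraph.Walk.support_reverse, List.mem_reverse] at hx
      exact SimpleGraph.Walk.support_takeUntil_subset _ _ hx
    · exact SimpleGraph.Walk.support_takeUntil_subset _ _ (List.mem_of_mem_tail hx)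
  obtain ⟨a', b', p, ha', hb', hsub, hlen⟩ := Nat.find_spec hP
  have hgood : ∀ j ∈ Finset.Icc 1 (2 * m), ∀ y ∈ p.support, y ∈ W j → y = a' ∨ y = b' := by
    intro j hj y hy hyW
    rw [Finset.mem_Icc] at hj
    by_contra hcon
    push_neg at hcon
    obtain ⟨hya, hyb⟩ := hcon
    have hsplit : (p.takeUntil y hy).length + (p.dropUntil y hy).length = p.length := by
      rw [← SimpleGraph.Walk.length_append, p.take_spec hy]
    have htpos : 0 < (p.takeUntil y hy).length :=
      Nat.pos_of_ne_zero fun h0 => hya (SimpleGraph.Walk.eq_of_length_eq_zero h0).symm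
    have hdpos : 0 < (p.dropUntil y hy).length :=
      Nat.pos_of_ne_zero fun h0 => hyb (SimpleGraph.Walk.eq_of_length_eq_zero h0)
    have hj4 : j < 2 * k - 1 ∨ j = 2 * k - 1 ∨ j = 2 * k ∨ 2 * k < j := by omega
    rcases hj4 with h4 | h4 | h4 | h4
    · -- j < 2k-1 : drop to y, then find a point of W (2k-1) further on, drop there
      set r := p.dropUntil y hy with hr
      obtain ⟨z, hzr, hzW⟩ := hsep j (2 * k - 1) (2 * k) hj.1 h4 (by omega) (by omega)
        _ ⟨y, b', r, hyW, hb', rfl⟩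
      have hzr' : z ∈ r.support := hzr
      have hzy : z ≠ y := fun h => W_ne hdisj (i := 2 * k - 1) (j := j) (by omega) (by omega)
        hj.1 hj.2 (by omega) hzW (h ▸ hyW)
      have h5 : (r.takeUntil z hzr').length + (r.dropUntil z hzr').length = r.length := by
        rw [← SimpleGraph.Walk.length_append, r.take_spec hzr']
      have h6 : 0 < (r.takeUntil z hzr').length :=
        Nat.pos_of_ne_zero fun h0 => hzy (SimpleGraph.Walk.eq_of_length_eq_zero h0).symm
      refine Nat.find_min hP (m := (r.dropUntil z hzr').length) (by omega)
        ⟨z, b', r.dropUntil z hzr', hzW, hb', ?_, rfl⟩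
      intro x hx
      exact hsub x (SimpleGraph.Walk.support_dropUntil_subset _ _
        (SimpleGraph.Walk.support_dropUntil_subset _ _ hx))
    · -- j = 2k-1 : drop to y
      refine Nat.find_min hP (m := (p.dropUntil y hy).length) (by omega)
        ⟨y, b', p.dropUntil y hy, h4 ▸ hyW, hb', ?_, rfl⟩
      intro x hx
      exact hsub x (SimpleGraph.Walk.support_dropUntil_subset _ _ hx)
    · -- j = 2k : take to y
      refine Nat.find_min hP (m := (p.takeUntil y hy).length) (by omega)
        ⟨a', y, p.takeUntil y hy, ha', h4 ▸ hyW, ?_, rfl⟩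
      intro x hx
      exact hsub x (SimpleGraph.Walk.support_takeUntil_subset _ _ hx)
    · -- 2k < j : take to y, then find a point of W (2k) before, take there
      set q := p.takeUntil y hy with hq
      obtain ⟨z, hzq, hzW⟩ := hsep (2 * k - 1) (2 * k) j (by omega) (by omega) h4 hj.2
        _ ⟨a', y, q, ha', hyW, rfl⟩
      have hzq' : z ∈ q.support := hzq
      have h5 : (q.takeUntil z hzq').length + (q.dropUntil z hzq').length = q.length := by
        rw [← SimpleGraph.Walk.length_append, q.take_spec hzq']
      refine Nat.find_min hP (m := (q.takeUntil z hzq').length) (by omega)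
        ⟨a', z, q.takeUntil z hzq', ha', hzW, ?_, rfl⟩
      intro x hx
      exact hsub x (SimpleGraph.Walk.support_takeUntil_subset _ _
        (SimpleGraph.Walk.support_takeUntil_subset _ _ hx))
  refine ⟨a', b', p.bypass, p.bypass_isPath, ⟨ha', hb', ?_⟩,
    fun x hx => hsub x (p.support_bypass_subset hx)⟩
  intro j hj y hy hyW
  exact hgood j hj y (p.support_bypass_subset hy) hyW

end Aux

lemma sq_sum_of_unique {ι : Type*} (F : Finset ι) (g : ι → ℝ≥0∞)
    (h : ∀ k ∈ F, ∀ k' ∈ F, g k ≠ 0 → g k' ≠ 0 → k = k') :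
    (∑ k ∈ F, g k) ^ 2 = ∑ k ∈ F, g k ^ 2 := by
  by_cases hex : ∃ k ∈ F, g k ≠ 0
  · obtain ⟨k₀, hk₀, hg⟩ := hex
    have h1 : ∑ k ∈ F, g k = g k₀ :=
      Finset.sum_eq_single_of_mem k₀ hk₀ fun b hb hne => by
        by_contra hb0
        exact hne (h b hb k₀ hk₀ hb0 hg)
    have h2 : ∑ k ∈ F, g k ^ 2 = g k₀ ^ 2 :=
      Finset.sum_eq_single_of_mem k₀ hk₀ fun b hb hne => by
        by_contra hb0
        refine hne (h b hb k₀ hk₀ (fun h0 => hb0 (by rw [h0]; ring)) hg)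
    rw [h1, h2]
  · push_neg at hex
    rw [Finset.sum_eq_zero hex, Finset.sum_eq_zero fun k hk => by rw [hex k hk]; ring]
    ring

/-- Superadditivity of vertex extremal length along nested separating families
(He, Lemma 5.1). -/
theorem stmt_9 {V : Type*} (G : SimpleGraph V) (m : ℕ) (hm : 0 < m) (W : ℕ → Set V)
    (hdisj : ∀ i ∈ Finset.Icc 1 (2 * m), ∀ j ∈ Finset.Icc 1 (2 * m), i ≠ j →
      Disjoint (W i) (W j))
    (hne : ∀ i ∈ Finset.Icc 1 (2 * m), (W i).Nonempty)
    (hsep : ∀ i₁ i₂ i₃ : ℕ, 1 ≤ i₁ → i₁ < i₂ → i₂ < i₃ → i₃ ≤ 2 * m →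
      ∀ S ∈ pathFamily G (W i₁) (W i₃), (S ∩ W i₂).Nonempty) :
    ∑ k ∈ Finset.Icc 1 m, VEL (pathFamily G (W (2 * k - 1)) (W (2 * k))) ≤
      VEL (pathFamily G (W 1) (W (2 * m))) := by
  classical
  set Γ := pathFamily G (W 1) (W (2 * m)) with hΓ
  set M : ℕ → ℝ≥0∞ := fun k => MOD (pathFamily G (W (2 * k - 1)) (W (2 * k))) with hM
  have key : ∀ ε : ℝ≥0∞, 0 < ε → ∑ k ∈ Finset.Icc 1 m, (M k + ε)⁻¹ ≤ (MOD Γ)⁻¹ := by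
    intro ε hε
    set t : ℕ → ℝ≥0∞ := fun k => (M k + ε)⁻¹ with ht
    set T := ∑ k ∈ Finset.Icc 1 m, t k with hT
    show T ≤ (MOD Γ)⁻¹
    by_cases hT0 : T = 0
    · rw [hT0]; exact zero_le
    have hTtop : T ≠ ⊤ := by
      refine (ENNReal.sum_lt_top.2 fun k _ => ?_).ne
      rw [ht]
      simp only [ENNReal.inv_lt_top]
      exact lt_of_lt_of_le hε le_add_self
    -- choose near-optimal admissible metrics
    have hνk : ∀ k ∈ Finset.Icc 1 m, ∃ ν : V → ℝ≥0∞,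
        vAdmissible (pathFamily G (W (2 * k - 1)) (W (2 * k))) ν ∧ vArea ν ≤ M k + ε := by
      intro k hk
      by_cases htop : M k + ε = ⊤
      · refine ⟨fun _ => ⊤, ?_, by rw [htop]; exact le_top⟩
        intro α hα
        obtain ⟨u, v, w, _, _, rfl⟩ := hα
        exact le_trans le_top (ENNReal.le_tsum ⟨u, w.start_mem_support⟩)
      · have hlt : MOD (pathFamily G (W (2 * k - 1)) (W (2 * k))) < M k + ε :=
          ENNReal.lt_add_right (fun h => htop (by simp only [hM]; rw [h, top_add])) hε.ne'
        obtain ⟨ν, hν⟩ := iInf_lt_iff.mp hlt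
        obtain ⟨hadm, harea⟩ := iInf_lt_iff.mp hν
        exact ⟨ν, hadm, harea.le⟩
    choose! ν hνadm hνarea using hνk
    set ν' : ℕ → V → ℝ≥0∞ := fun k x => if x ∈ Rk G m W k then ν k x else 0 with hν'
    have hlow : ∀ S ∈ Γ, ∀ k ∈ Finset.Icc 1 m, (1 : ℝ≥0∞) ≤ ∑' x : S, ν' k x := by
      intro S hS k hk
      rw [Finset.mem_Icc] at hk
      obtain ⟨a, b, p, hp, hgood, hsubS⟩ := exists_good_subwalk hdisj hsep hm hk.1 hk.2 hS
      have hsubR : ∀ x ∈ p.support, x ∈ Rk G m W k := fun x hx => ⟨a, b, p, hp, hgood, hx⟩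
      have h1 : (1 : ℝ≥0∞) ≤ ∑' x : {x | x ∈ p.support}, ν k x :=
        hνadm k (Finset.mem_Icc.2 hk) _ ⟨a, b, p, hgood.1, hgood.2.1, rfl⟩
      have heq : (∑' x : {x | x ∈ p.support}, ν k x.1) =
          ∑' x : {x | x ∈ p.support}, ν' k x.1 :=
        tsum_congr fun x => by simp only [hν']; rw [if_pos (hsubR x.1 x.2)]
      have hle : (∑' x : {x | x ∈ p.support}, ν' k x.1) ≤ ∑' x : S, ν' k x.1 := by
        rw [tsum_subtype, tsum_subtype]
        exact ENNReal.tsum_le_tsum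
          (Set.indicator_le_indicator_of_subset (fun x hx => hsubS x hx) fun _ => zero_le)
      exact h1.trans (heq.le.trans hle)
    have hdsupp : ∀ x : V, ∀ k ∈ Finset.Icc 1 m, ∀ k' ∈ Finset.Icc 1 m,
        ν' k x ≠ 0 → ν' k' x ≠ 0 → k = k' := by
      intro x k hk k' hk' h h'
      by_contra hne'
      have hxk : x ∈ Rk G m W k := by
        by_contra hc
        exact h (by simp only [hν', hc, if_false])
      have hxk' : x ∈ Rk G m W k' := by
        by_contra hc
        exact h' (by simp only [hν', hc, if_false])
      rw [Finset.mem_Icc] at hk hk'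
      rcases lt_or_gt_of_ne hne' with hlt | hlt
      · exact Rk_disjoint hdisj hsep hk.1 hlt hk'.2 hxk hxk'
      · exact Rk_disjoint hdisj hsep hk'.1 hlt hk.2 hxk' hxk
    set c : ℕ → ℝ≥0∞ := fun k => t k * T⁻¹ with hc
    set g : V → ℝ≥0∞ := fun x => ∑ k ∈ Finset.Icc 1 m, c k * ν' k x with hg
    have hgadm : vAdmissible Γ g := by
      intro S hS
      have hsum : ∑' x : S, g x = ∑ k ∈ Finset.Icc 1 m, c k * ∑' x : S, ν' k x := by
        rw [hg]
        rw [Summable.tsum_finsetSum fun i _ => ENNReal.summable]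
        exact Finset.sum_congr rfl fun k _ => ENNReal.tsum_mul_left
      rw [hsum]
      calc (1 : ℝ≥0∞) = T * T⁻¹ := (ENNReal.mul_inv_cancel hT0 hTtop).symm
        _ = ∑ k ∈ Finset.Icc 1 m, c k := by rw [hT, Finset.sum_mul]
        _ ≤ ∑ k ∈ Finset.Icc 1 m, c k * ∑' x : S, ν' k x := by
            refine Finset.sum_le_sum fun k hk => ?_
            conv_lhs => rw [← mul_one (c k)]
            exact mul_le_mul_right (hlow S hS k hk) _
    have hgarea : vArea g ≤ T⁻¹ := by
      have hpt : ∀ x : V, g x ^ 2 = ∑ k ∈ Finset.Icc 1 m, (c k * ν' k x) ^ 2 := by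
        intro x
        rw [hg]
        exact sq_sum_of_unique _ _ fun k hk k' hk' hnz hnz' =>
          hdsupp x k hk k' hk' (fun h0 => hnz (by rw [h0, mul_zero]))
            (fun h0 => hnz' (by rw [h0, mul_zero]))
      calc vArea g = ∑' x, g x ^ 2 := rfl
        _ = ∑' x, ∑ k ∈ Finset.Icc 1 m, (c k * ν' k x) ^ 2 := tsum_congr hpt
        _ = ∑ k ∈ Finset.Icc 1 m, ∑' x, (c k * ν' k x) ^ 2 :=
            Summable.tsum_finsetSum fun i _ => ENNReal.summable
        _ = ∑ k ∈ Finset.Icc 1 m, c k ^ 2 * ∑' x, ν' k x ^ 2 := by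
            refine Finset.sum_congr rfl fun k _ => ?_
            simp_rw [mul_pow]
            exact ENNReal.tsum_mul_left
        _ ≤ ∑ k ∈ Finset.Icc 1 m, t k * T⁻¹ * T⁻¹ := by
            refine Finset.sum_le_sum fun k hk => ?_
            by_cases ht0 : t k = 0
            · simp [hc, ht0]
            · have htk_top : t k ≠ ⊤ := by
                rw [ht]
                simp only [ne_eq, ENNReal.inv_eq_top]
                intro h0
                exact hε.ne' (by simpa using (add_eq_zero.1 h0).2)
              have hB : ∑' x, ν' k x ^ 2 ≤ (t k)⁻¹ := by
                have h1 : ∑' x, ν' k x ^ 2 ≤ vArea (ν k) := by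
                  refine ENNReal.tsum_le_tsum fun x => ?_
                  rw [hν']
                  by_cases hx : x ∈ Rk G m W k
                  · simp only [hx, if_true]; exact le_rfl
                  · simp only [hx, if_false]
                    rw [zero_pow (two_ne_zero)]
                    exact zero_le
                have h2 : vArea (ν k) ≤ M k + ε := by
                  by_cases hkm : k ∈ Finset.Icc 1 m
                  · exact hνarea k hkm
                  · exact absurd hkm (by simpa using hk)
                simp only [ht]
                rw [inv_inv]
                exact h1.trans h2
              calc c k ^ 2 * ∑' x, ν' k x ^ 2 ≤ c k ^ 2 * (t k)⁻¹ :=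
                    mul_le_mul_right hB _
                _ = t k ^ 2 * (t k)⁻¹ * (T⁻¹ * T⁻¹) := by rw [hc]; ring
                _ = t k * T⁻¹ * T⁻¹ := by
                    rw [pow_two, mul_assoc (t k), ENNReal.mul_inv_cancel ht0 htk_top, mul_one]
                    ring
        _ = T⁻¹ := by
            rw [← Finset.sum_mul, ← Finset.sum_mul, ← hT,
              ENNReal.mul_inv_cancel hT0 hTtop, one_mul]
    have hMOD : MOD Γ ≤ T⁻¹ := le_trans (iInf₂_le g hgadm) hgarea
    calc T = (T⁻¹)⁻¹ := (inv_inv T).symm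
      _ ≤ (MOD Γ)⁻¹ := ENNReal.inv_le_inv.2 hMOD
  -- pass to the limit ε → 0
  have hlim : Filter.Tendsto (fun ε : ℝ≥0∞ => ∑ k ∈ Finset.Icc 1 m, (M k + ε)⁻¹)
      (nhdsWithin 0 (Set.Ioi 0)) (nhds (∑ k ∈ Finset.Icc 1 m, (M k)⁻¹)) := by
    refine tendsto_finset_sum _ fun k _ => ?_
    have h : Filter.Tendsto (fun ε : ℝ≥0∞ => M k + ε) (nhdsWithin 0 (Set.Ioi 0))
        (nhds (M k)) := by
      have h0 : Filter.Tendsto (fun x : ℝ≥0∞ => M k + x) (nhds 0) (nhds (M k + 0)) :=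
        Continuous.tendsto (continuous_const.add continuous_id) 0
      rw [add_zero] at h0
      exact h0.mono_left nhdsWithin_le_nhds
    exact h.inv
  have hfin : ∑ k ∈ Finset.Icc 1 m, (M k)⁻¹ ≤ (MOD Γ)⁻¹ := by
    refine le_of_tendsto hlim ?_
    filter_upwards [self_mem_nhdsWithin] with ε hε
    exact key ε hε
  exact hfin
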